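/- The velocity of the marginal of an exponential family is the conditional expectation of its velocity: let p₁, p₂ be positive densities on nonempty finite sets Ω₁, Ω₂, T : Ω₁ × Ω₂ → (Fin d → ℝ), ψ(θ) = log(∑_{x,y} exp(θ·T(x,y)) p₁(x)p₂(y)), G(θ)(x,y) = exp(θ·T(x,y) − ψ(θ)) p₁(x)p₂(y), G₁(θ)(x) = ∑_z G(θ)(x,z), and let t ↦ θ(t) be differentiable at t₀. Then for every x ∈ Ω₁, t ↦ log G₁(θ(t))(x) is differentiable at t₀ with derivative ∑_j ( ∑_z (T_j(x,z) − E_{G(θ(t₀))}[T_j]) · G(θ(t₀))(x,z)/G₁(θ(t₀))(x) ) · θ'_j(t₀). -/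

import Mathlib

/-- Log-partition function of the exponential family on a product space with
reference density `p₁ ⊗ p₂`. -/
noncomputable def logPartition2 {Ω₁ Ω₂ : Type*} [Fintype Ω₁] [Fintype Ω₂] {d : ℕ}
    (p₁ : Ω₁ → ℝ) (p₂ : Ω₂ → ℝ) (T : Ω₁ × Ω₂ → Fin d → ℝ) (θ : Fin d → ℝ) : ℝ :=
  Real.log (∑ x, ∑ y, Real.exp (∑ j, θ j * T (x, y) j) * (p₁ x * p₂ y))

/-- The exponential family `G(θ)(x,y) = exp(θ·T(x,y) - ψ(θ)) · p₁(x) p₂(y)`. -/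
noncomputable def expFamily2 {Ω₁ Ω₂ : Type*} [Fintype Ω₁] [Fintype Ω₂] {d : ℕ}
    (p₁ : Ω₁ → ℝ) (p₂ : Ω₂ → ℝ) (T : Ω₁ × Ω₂ → Fin d → ℝ) (θ : Fin d → ℝ)
    (x : Ω₁) (y : Ω₂) : ℝ :=
  Real.exp ((∑ j, θ j * T (x, y) j) - logPartition2 p₁ p₂ T θ) * (p₁ x * p₂ y)

private lemma sum_mul_swap' {κ : Type*} [Fintype κ] {d : ℕ} (θ' : Fin d → ℝ)
    (u : κ → Fin d → ℝ) (c : κ → ℝ) :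
    ∑ j, (∑ z, u z j * c z) * θ' j = ∑ z, (∑ j, θ' j * u z j) * c z := by
  simp only [Finset.sum_mul]
  rw [Finset.sum_comm]
  exact Finset.sum_congr rfl fun z _ => Finset.sum_congr rfl fun j _ => by ring

/-- The velocity of the marginal of an exponential family is the conditional
expectation of its velocity:
`(d/dt) log G₁(θ t)(x) |_{t₀}
  = ∑ j, (∑ z, (T_j(x,z) - E_{G(θ t₀)}[T_j]) · G(θ t₀)(x,z)/G₁(θ t₀)(x)) · θ'_j(t₀)`. -/
theorem expFamily_marginal_velocity {Ω₁ Ω₂ : Type*}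
    [Fintype Ω₁] [Fintype Ω₂] [Nonempty Ω₁] [Nonempty Ω₂] {d : ℕ}
    (p₁ : Ω₁ → ℝ) (hp₁ : ∀ x, 0 < p₁ x) (hp₁s : ∑ x, p₁ x = 1)
    (p₂ : Ω₂ → ℝ) (hp₂ : ∀ y, 0 < p₂ y) (hp₂s : ∑ y, p₂ y = 1)
    (T : Ω₁ × Ω₂ → Fin d → ℝ)
    (θ : ℝ → Fin d → ℝ) (θ' : Fin d → ℝ) (t₀ : ℝ)
    (hθ : ∀ j, HasDerivAt (fun t => θ t j) (θ' j) t₀)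
    (x : Ω₁) :
    HasDerivAt (fun t => Real.log (∑ z, expFamily2 p₁ p₂ T (θ t) x z))
      (∑ j, (∑ z, (T (x, z) j - ∑ x', ∑ y', T (x', y') j * expFamily2 p₁ p₂ T (θ t₀) x' y')
          * expFamily2 p₁ p₂ T (θ t₀) x z / (∑ z', expFamily2 p₁ p₂ T (θ t₀) x z'))
        * θ' j) t₀ := by
  classical
  set Z : ℝ → ℝ := fun t => ∑ x', ∑ y', Real.exp (∑ j, θ t j * T (x', y') j) * (p₁ x' * p₂ y')
    with hZdef
  set S : ℝ → ℝ := fun t => ∑ z, Real.exp (∑ j, θ t j * T (x, z) j) * (p₁ x * p₂ z) with hSdef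
  have hZpos : ∀ t, 0 < Z t := by
    intro t
    refine Finset.sum_pos (fun x' _ => Finset.sum_pos (fun y' _ => ?_) Finset.univ_nonempty)
      Finset.univ_nonempty
    exact mul_pos (Real.exp_pos _) (mul_pos (hp₁ _) (hp₂ _))
  have hSpos : ∀ t, 0 < S t := by
    intro t
    refine Finset.sum_pos (fun z _ => ?_) Finset.univ_nonempty
    exact mul_pos (Real.exp_pos _) (mul_pos (hp₁ _) (hp₂ _))
  have hZne : Z t₀ ≠ 0 := (hZpos t₀).ne'
  have hSne : S t₀ ≠ 0 := (hSpos t₀).ne'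
  have hθsum : ∀ p : Ω₁ × Ω₂, HasDerivAt (fun t => ∑ j, θ t j * T p j)
      (∑ j, θ' j * T p j) t₀ := fun p =>
    HasDerivAt.fun_sum fun j _ => (hθ j).mul_const _
  have hS' : HasDerivAt S
      (∑ z, Real.exp (∑ j, θ t₀ j * T (x, z) j) * (∑ j, θ' j * T (x, z) j)
        * (p₁ x * p₂ z)) t₀ :=
    HasDerivAt.fun_sum fun z _ => ((hθsum (x, z)).exp.mul_const _)
  have hZ' : HasDerivAt Z
      (∑ x', ∑ y', Real.exp (∑ j, θ t₀ j * T (x', y') j) * (∑ j, θ' j * T (x', y') j)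
        * (p₁ x' * p₂ y')) t₀ :=
    HasDerivAt.fun_sum fun x' _ => HasDerivAt.fun_sum fun y' _ => ((hθsum (x', y')).exp.mul_const _)
  -- the function equals log S - log Z
  have hfun : (fun t => Real.log (∑ z, expFamily2 p₁ p₂ T (θ t) x z))
      = fun t => Real.log (S t) - Real.log (Z t) := by
    funext t
    have : ∑ z, expFamily2 p₁ p₂ T (θ t) x z = S t / Z t := by
      simp only [hSdef]
      rw [Finset.sum_div]
      refine Finset.sum_congr rfl fun z _ => ?_
      rw [expFamily2, logPartition2, Real.exp_sub, Real.exp_log (hZpos t)]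
      ring
    rw [this, Real.log_div (hSpos t).ne' (hZpos t).ne']
  rw [hfun]
  have key := (hS'.log hSne).fun_sub (hZ'.log hZne)
  refine key.congr_deriv (Eq.symm ?_)
  -- now the value identity
  have hG : ∀ (x' : Ω₁) (y' : Ω₂), expFamily2 p₁ p₂ T (θ t₀) x' y'
      = Real.exp (∑ j, θ t₀ j * T (x', y') j) * (p₁ x' * p₂ y') / Z t₀ := by
    intro x' y'
    rw [expFamily2, logPartition2, Real.exp_sub, Real.exp_log (hZpos t₀)]
    ring
  have hGsum : (∑ z', expFamily2 p₁ p₂ T (θ t₀) x z') = S t₀ / Z t₀ := by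
    simp only [hSdef]
    rw [Finset.sum_div]
    exact Finset.sum_congr rfl fun z _ => hG x z
  have hE : ∀ j, (∑ x', ∑ y', T (x', y') j * expFamily2 p₁ p₂ T (θ t₀) x' y')
      = (∑ x', ∑ y', T (x', y') j * (Real.exp (∑ k, θ t₀ k * T (x', y') k) * (p₁ x' * p₂ y')))
        / Z t₀ := by
    intro j
    rw [Finset.sum_div]
    refine Finset.sum_congr rfl fun x' _ => ?_
    rw [Finset.sum_div]
    refine Finset.sum_congr rfl fun y' _ => ?_
    rw [hG]
    ring
  simp only [hGsum, hE]
  simp only [hG]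
  have hdiv : ∀ a b : ℝ, a * (b / Z t₀) / (S t₀ / Z t₀) = a * b / S t₀ := by
    intro a b
    rw [mul_div_assoc, div_div_div_cancel_right₀ hZne, ← mul_div_assoc]
  simp only [hdiv]
  have hstep : ∀ j : Fin d, (∑ z, (T (x, z) j
        - (∑ x', ∑ y', T (x', y') j * (Real.exp (∑ k, θ t₀ k * T (x', y') k) * (p₁ x' * p₂ y')))
          / Z t₀)
      * (Real.exp (∑ k, θ t₀ k * T (x, z) k) * (p₁ x * p₂ z)) / S t₀)
      = (∑ z, T (x, z) j * (Real.exp (∑ k, θ t₀ k * T (x, z) k) * (p₁ x * p₂ z))) / S t₀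
        - (∑ x', ∑ y', T (x', y') j * (Real.exp (∑ k, θ t₀ k * T (x', y') k) * (p₁ x' * p₂ y')))
          / Z t₀ := by
    intro j
    set B := (∑ x', ∑ y', T (x', y') j * (Real.exp (∑ k, θ t₀ k * T (x', y') k) * (p₁ x' * p₂ y')))
      / Z t₀ with hB
    rw [← Finset.sum_div]
    rw [show (∑ z, (T (x, z) j - B) * (Real.exp (∑ k, θ t₀ k * T (x, z) k) * (p₁ x * p₂ z)))
        = (∑ z, T (x, z) j * (Real.exp (∑ k, θ t₀ k * T (x, z) k) * (p₁ x * p₂ z))) - B * S t₀ by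
      simp only [hSdef]
      rw [Finset.mul_sum, ← Finset.sum_sub_distrib]
      exact Finset.sum_congr rfl fun z _ => by ring]
    rw [sub_div, mul_div_assoc, div_self hSne, mul_one]
  simp only [hstep]
  simp only [sub_mul, Finset.sum_sub_distrib]
  congr 1
  · simp only [div_mul_eq_mul_div]
    rw [← Finset.sum_div]
    congr 1
    rw [show (∑ j, (∑ z, T (x, z) j * (Real.exp (∑ k, θ t₀ k * T (x, z) k) * (p₁ x * p₂ z))) * θ' j)
        = ∑ z, (∑ j, θ' j * T (x, z) j) * (Real.exp (∑ k, θ t₀ k * T (x, z) k) * (p₁ x * p₂ z))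
      from sum_mul_swap' θ' (fun z => T (x, z)) _]
    exact Finset.sum_congr rfl fun z _ => by ring
  · simp only [div_mul_eq_mul_div]
    rw [← Finset.sum_div]
    congr 1
    simp only [Finset.sum_mul]
    rw [Finset.sum_comm]
    refine Finset.sum_congr rfl fun x' _ => ?_
    rw [Finset.sum_comm]
    refine Finset.sum_congr rfl fun y' _ => ?_
    rw [Finset.mul_sum, Finset.sum_mul]
    exact Finset.sum_congr rfl fun j _ => by ring
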